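/- Let G and G' be finite strategic games sharing players I_G ∩ I_{G'} ≠ ∅, with strictly positive payoffs. In the combined game G + G', where each shared player i has strategy set S_i^G × S_i^{G'} and payoff equal to the product π_i^G(s) · π_i^{G'}(s'), non-shared players keep their original strategy sets and payoffs, then: a profile is a Nash equilibrium of G + G' if and only if its G-component is a Nash equilibrium of G and its G'-component is a Nash equilibrium of G'. -/
import Mathlib


/-- Pure Nash equilibrium of the game with players `I`, strategy sets `S`, and
payoffs `π` (only deviations by players in `I` matter). -/
def IsNashOn {P : Type} [DecidableEq P] (I : Finset P) (S : P → Type)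
    (π : P → (∀ p, S p) → ℝ) (s : ∀ p, S p) : Prop :=
  ∀ i ∈ I, ∀ a : S i, π i (Function.update s i a) ≤ π i s

/-- Pure Nash equilibrium of the combined game `G + G'` over player set
`I ∪ J`, where a shared player `i ∈ I ∩ J` chooses a pair of strategies and her
payoff is the product `π_i^G(s) · π_i^{G'}(s')`, while non-shared players keep
their original strategy sets and payoffs. -/
def IsNashCombProd {P : Type} [DecidableEq P] (I J : Finset P)
    (S T : P → Type) (π : P → (∀ p, S p) → ℝ) (π' : P → (∀ p, T p) → ℝ)
    (st : (∀ p, S p) × (∀ p, T p)) : Prop :=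
  (∀ i ∈ I, i ∉ J → ∀ a : S i, π i (Function.update st.1 i a) ≤ π i st.1) ∧
  (∀ j ∈ J, j ∉ I → ∀ b : T j, π' j (Function.update st.2 j b) ≤ π' j st.2) ∧
  (∀ i ∈ I, i ∈ J → ∀ (a : S i) (b : T i),
      π i (Function.update st.1 i a) * π' i (Function.update st.2 i b) ≤
        π i st.1 * π' i st.2)

/-- for finite games with strictly positive payoffs sharing
players, a profile of the combined game `G + G'` (product payoffs for shared
players) is a Nash equilibrium iff its `G`-component is a Nash equilibrium of
`G` and its `G'`-component is a Nash equilibrium of `G'`. -/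
theorem nash_combined_product
    {P : Type} [Fintype P] [DecidableEq P] (I J : Finset P)
    (hshared : (I ∩ J).Nonempty)
    (S T : P → Type) [∀ p, Fintype (S p)] [∀ p, Fintype (T p)]
    (π : P → (∀ p, S p) → ℝ) (π' : P → (∀ p, T p) → ℝ)
    (hpos : ∀ i ∈ I, ∀ s, 0 < π i s) (hpos' : ∀ j ∈ J, ∀ t, 0 < π' j t)
    (hloc : ∀ i ∈ I, ∀ s s' : ∀ p, S p, (∀ j ∈ I, s j = s' j) → π i s = π i s')
    (hloc' : ∀ i ∈ J, ∀ t t' : ∀ p, T p, (∀ j ∈ J, t j = t' j) → π' i t = π' i t')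
    (st : (∀ p, S p) × (∀ p, T p)) :
    IsNashCombProd I J S T π π' st ↔
      IsNashOn I S π st.1 ∧ IsNashOn J T π' st.2 := by
  constructor
  · rintro ⟨h1, h2, h3⟩
    constructor
    · intro i hi a
      by_cases hiJ : i ∈ J
      · have := h3 i hi hiJ a (st.2 i)
        rw [Function.update_eq_self] at this
        exact le_of_mul_le_mul_right this (hpos' i hiJ st.2)
      · exact h1 i hi hiJ a
    · intro j hj b
      by_cases hjI : j ∈ I
      · have := h3 j hjI hj (st.1 j) b
        rw [Function.update_eq_self] at this
        rw [mul_comm (π j st.1)] at this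
        rw [mul_comm (π j st.1)] at this
        exact le_of_mul_le_mul_right this (hpos j hjI st.1)
      · exact h2 j hj hjI b
  · rintro ⟨hG, hG'⟩
    refine ⟨fun i hi _ a => hG i hi a, fun j hj _ b => hG' j hj b,
      fun i hi hiJ a b => ?_⟩
    exact mul_le_mul (hG i hi a) (hG' i hiJ b)
      (le_of_lt (hpos' i hiJ _)) (le_of_lt (hpos i hi st.1))
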